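/- Let Δ, P ∈ Λ with Δ symmetric, Δ(1) ≠ 0, and P symmetric and coprime to Δ. Then there exist an integer n ≥ 1, a hermitian matrix A ∈ Mₙ(Λ), and a nonzero rational number r, such that det(A) = rΔ and the (1,1)-cofactor of A equals −rP. -/

import Mathlib

open LaurentPolynomial

set_option maxHeartbeats 1000000
set_option synthInstance.maxHeartbeats 400000

noncomputable section

/-- `Λ = ℚ[t,t⁻¹]`, the ring of Laurent polynomials over `ℚ`. -/
abbrev Λ : Type := LaurentPolynomial ℚ

/-- The variable `t` of `Λ`. -/
def tΛ : Λ := T 1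

/-- The involution `P(t) ↦ P(t⁻¹)` of `Λ`. -/
def lbar : Λ →+* Λ := (invert : Λ ≃ₐ[ℚ] Λ).toRingEquiv.toRingHom

/-- `P ∈ Λ` is symmetric if `P(t⁻¹) = P(t)`. -/
def SymmL (P : Λ) : Prop := lbar P = P

/-- The fraction field `ℚ(t)` of `Λ`. -/
abbrev KΛ : Type := FractionRing Λ

/-- The involution of `ℚ(t)` extending that of `Λ`. -/
def kbar : KΛ →+* KΛ :=
  (IsFractionRing.ringEquivOfRingEquiv (A := Λ) (B := Λ) (K := KΛ) (L := KΛ)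
    (invert : Λ ≃ₐ[ℚ] Λ).toRingEquiv).toRingHom

lemma kbar_algebraMap (P : Λ) : kbar (algebraMap Λ KΛ P) = algebraMap Λ KΛ (lbar P) := by
  simp [kbar, lbar]

/-- The image of `Λ` inside `ℚ(t)`, as a `Λ`-submodule of `ℚ(t)`. -/
def ΛinK : Submodule Λ KΛ := LinearMap.range (Algebra.linearMap Λ KΛ)

/-- The quotient `Λ`-module `ℚ(t)/Λ`. -/
abbrev QL : Type := KΛ ⧸ ΛinK

/-- The class in `ℚ(t)/Λ` of an element of `ℚ(t)`. -/
abbrev QLmk : KΛ →ₗ[Λ] QL := ΛinK.mkQ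

/-- The class of the fraction `P/Q` in `ℚ(t)/Λ`, for `P Q : Λ`. -/
def fracQ (P Q : Λ) : QL := QLmk (algebraMap Λ KΛ P / algebraMap Λ KΛ Q)

/-- The involution of `ℚ(t)/Λ` induced by `P(t) ↦ P(t⁻¹)`. -/
def qbar : QL → QL := fun x =>
  Quotient.liftOn x (fun a => QLmk (kbar a)) (by
    intro a b h
    obtain ⟨r, hr⟩ := (Submodule.quotientRel_def (p := ΛinK)).mp h
    apply (Submodule.Quotient.eq _).2
    refine ⟨lbar r, ?_⟩
    rw [← map_sub, ← hr]
    exact (kbar_algebraMap _).symm)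

lemma qbar_mk (a : KΛ) : qbar (QLmk a) = QLmk (kbar a) := rfl

/-- Evaluation of a Laurent polynomial at a nonzero rational number. -/
def evalL (q : ℚˣ) : Λ →ₐ[ℚ] ℚ :=
  AddMonoidAlgebra.lift ℚ ℚ ℤ ((Units.coeHom ℚ).comp (zpowersHom ℚˣ q))

/-- A hermitian form on a `Λ`-module `A`, with values in `ℚ(t)/Λ`:
it is `Λ`-linear in the first variable and conjugate-symmetric (hence
semilinear with respect to the involution in the second variable). -/
structure HermForm (A : Type*) [AddCommGroup A] [Module Λ A] where
  bil : A → A → QL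
  add_left : ∀ x y z : A, bil (x + y) z = bil x z + bil y z
  smul_left : ∀ (r : Λ) (x y : A), bil (r • x) y = r • bil x y
  conj_symm : ∀ x y : A, bil x y = qbar (bil y x)

/-- A hermitian form is non-degenerate if `φ(x,y) = 0` for all `y` implies `x = 0`. -/
def HermForm.Nondeg {A : Type*} [AddCommGroup A] [Module Λ A] (φ : HermForm A) : Prop :=
  ∀ x : A, (∀ y : A, φ.bil x y = 0) → x = 0

/-- Two hermitian forms are isometric if they differ by a `Λ`-module automorphism. -/
def HermForm.Isometric {A : Type*} [AddCommGroup A] [Module Λ A]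
    (φ₁ φ₂ : HermForm A) : Prop :=
  ∃ f : A ≃ₗ[Λ] A, ∀ x y : A, φ₂.bil x y = φ₁.bil (f x) (f y)


open Polynomial

lemma lbar_lbar (x : Λ) : lbar (lbar x) = x := involutive_invert x

lemma lbar_C (c : ℚ) : lbar (LaurentPolynomial.C c) = LaurentPolynomial.C c := invert_C c

lemma lbar_apply (x : Λ) : lbar x = invert x := rfl

def sΛ : Λ := T 1 + T (-1)

def φL : ℚ[X] →ₐ[ℚ] Λ := Polynomial.aeval sΛ

lemma symm_phi (f : ℚ[X]) : SymmL (φL f) := by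
  show lbar _ = _
  rw [lbar_apply, φL, ← Polynomial.aeval_algHom_apply (invert : Λ ≃ₐ[ℚ] Λ) sΛ f]
  congr 1
  simp [sΛ, add_comm]

lemma evalL_T (q : ℚˣ) (n : ℤ) : evalL q (T n) = ((q ^ n : ℚˣ) : ℚ) := by
  show (AddMonoidAlgebra.lift ℚ ℚ ℤ) _ (AddMonoidAlgebra.single n 1) = _
  rw [AddMonoidAlgebra.lift_single]
  simp

lemma evalL_phi (q : ℚˣ) (f : ℚ[X]) :
    evalL q (φL f) = Polynomial.eval ((q : ℚ) + (q : ℚ)⁻¹) f := by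
  rw [φL, ← Polynomial.aeval_algHom_apply (evalL q) sΛ f]
  have h : evalL q sΛ = (q : ℚ) + (q : ℚ)⁻¹ := by
    simp [sΛ, map_add, evalL_T]
  rw [h]
  rw [← Polynomial.coe_aeval_eq_eval]

lemma phi_injective : Function.Injective φL := by
  have h0 : ∀ f : ℚ[X], φL f = 0 → f = 0 := by
    intro f hf
    apply Polynomial.eq_zero_of_infinite_isRoot
    set g : ℕ → ℚ := fun k => ((k + 1 : ℚ)) + ((k + 1 : ℚ))⁻¹ with hg
    apply Set.infinite_of_injective_forall_mem (f := g)
    · have : StrictMono g := by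
        apply strictMono_nat_of_lt_succ
        intro k
        show ((k:ℚ)+1) + ((k:ℚ)+1)⁻¹ < (((k+1:ℕ)):ℚ)+1 + ((((k+1:ℕ)):ℚ)+1)⁻¹
        push_cast
        rw [show ((k:ℚ)+1+1) = (k:ℚ)+2 from by ring]
        have h1 : (0:ℚ) < (k:ℚ) + 1 := by positivity
        have h2 : (0:ℚ) < (k:ℚ) + 2 := by positivity
        have e1 : ((k:ℚ)+1)⁻¹ = ((k:ℚ)+2)⁻¹ + (((k:ℚ)+1)*((k:ℚ)+2))⁻¹ := by
          field_simp
          ring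
        have e2 : (0:ℚ) < (((k:ℚ)+1)*((k:ℚ)+2))⁻¹ := by positivity
        have e4 : (1:ℚ) < ((k:ℚ)+1)*((k:ℚ)+2) := by nlinarith
        have e3 : (((k:ℚ)+1)*((k:ℚ)+2))⁻¹ < 1 := by
          rw [inv_lt_one_iff₀]
          right; exact e4
        linarith [e1, e2, e3]
      exact this.injective
    · intro k
      have hk : ((k:ℚ)+1) ≠ 0 := by positivity
      obtain ⟨u, hu⟩ := (isUnit_iff_ne_zero.mpr hk)
      have h2 := evalL_phi u f
      rw [hf] at h2
      simp only [map_zero] at h2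
      show Polynomial.IsRoot f (g k)
      have : g k = (u : ℚ) + (u : ℚ)⁻¹ := by rw [hg]; rw [hu]
      rw [Polynomial.IsRoot, this]
      exact h2.symm
  intro a b hab
  have h1 : φL (a - b) = 0 := by rw [map_sub, hab, sub_self]
  exact sub_eq_zero.mp (h0 _ h1)

lemma phi_C (c : ℚ) : φL (Polynomial.C c) = LaurentPolynomial.C c := by
  rw [φL, Polynomial.aeval_C, LaurentPolynomial.C_eq_algebraMap]

lemma psi_mem : ∀ n : ℕ, ∃ f : ℚ[X], φL f = T n + T (-(n:ℤ)) := by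
  intro n
  induction n using Nat.strong_induction_on with
  | _ n ih =>
    match n with
    | 0 => exact ⟨Polynomial.C 2, by
        rw [phi_C]
        norm_num [T_zero]
        rw [show ((2:ℚ)) = 1 + 1 by norm_num, map_add, map_one]
        ring⟩
    | 1 => exact ⟨Polynomial.X, by rw [φL, Polynomial.aeval_X]; rfl⟩
    | (m+2) =>
      obtain ⟨f1, hf1⟩ := ih (m+1) (by omega)
      obtain ⟨f0, hf0⟩ := ih m (by omega)
      refine ⟨Polynomial.X * f1 - f0, ?_⟩
      rw [map_sub, map_mul, hf0, hf1, φL, Polynomial.aeval_X]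
      show (T 1 + T (-1)) * _ - _ = _
      rw [add_mul, mul_add, mul_add, ← T_add, ← T_add, ← T_add, ← T_add]
      push_cast
      rw [show (1 + ((m:ℤ) + 1)) = ((m:ℤ)+2) by ring, show ((-1) + ((m:ℤ)+1)) = (m:ℤ) by ring,
        show (1 + -((m:ℤ)+1)) = -(m:ℤ) by ring, show ((-1) + -((m:ℤ)+1)) = -((m:ℤ)+2) by ring]
      ring

lemma symm_coeff {F : Λ} (h : SymmL F) (k : ℤ) : F.coeff (-k) = F.coeff k := by
  have h2 : invert F = F := h
  calc F.coeff (-k) = (invert F).coeff k := (invert_apply F k).symm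
  _ = F.coeff k := by rw [h2]

lemma single_eq (m : ℤ) (c : ℚ) :
    (LaurentPolynomial.C c * T m : Λ) = AddMonoidAlgebra.single m c := (single_eq_C_mul_T c m).symm

lemma symm_surj_aux : ∀ n : ℕ, ∀ F : Λ, SymmL F → (∀ k : ℤ, (n:ℤ) < |k| → F.coeff k = 0) →
    ∃ f : ℚ[X], φL f = F := by
  intro n
  induction n with
  | zero =>
    intro F hs hb
    refine ⟨Polynomial.C (F.coeff 0), ?_⟩
    rw [phi_C]
    have h1 : (LaurentPolynomial.C (F.coeff 0) : Λ) = AddMonoidAlgebra.single 0 (F.coeff 0) := by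
      rw [← single_eq 0 (F.coeff 0), T_zero, mul_one]
    rw [h1]
    ext k
    rcases eq_or_ne k 0 with rfl | hk
    · simp
    · rw [AddMonoidAlgebra.coeff_single, Finsupp.single_apply, if_neg (fun h => hk h.symm)]
      exact (hb k (by simpa using abs_pos.mpr hk)).symm
  | succ n ih =>
    intro F hs hb
    set c : ℚ := F.coeff ((n:ℤ)+1) with hc
    set F' : Λ := F - LaurentPolynomial.C c * T ((n:ℤ)+1) - LaurentPolynomial.C c * T (-((n:ℤ)+1)) with hF'
    have hs' : SymmL F' := by
      rw [SymmL, hF', map_sub, map_sub, lbar_apply, lbar_apply, lbar_apply, map_mul, map_mul,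
        invert_C, invert_T, invert_T]
      have h3 := hs
      rw [SymmL, lbar_apply] at h3
      rw [h3, neg_neg]
      ring
    have hb' : ∀ k : ℤ, (n:ℤ) < |k| → F'.coeff k = 0 := by
      intro k hk
      rw [hF', single_eq, single_eq, AddMonoidAlgebra.coeff_sub, AddMonoidAlgebra.coeff_sub, Finsupp.sub_apply, Finsupp.sub_apply,
        AddMonoidAlgebra.coeff_single, AddMonoidAlgebra.coeff_single, Finsupp.single_apply, Finsupp.single_apply]
      by_cases h1 : ((n:ℤ)+1) = k
      · subst h1
        rw [if_pos rfl, if_neg (by omega), ← hc]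
        ring
      by_cases h2 : (-((n:ℤ)+1)) = k
      · subst h2
        rw [if_neg h1, if_pos rfl]
        have h4 := symm_coeff hs ((n:ℤ)+1)
        rw [h4, ← hc]
        ring
      · have hbig : ((n:ℤ)+1) < |k| := by
          rcases abs_cases k with ⟨he, h0⟩ | ⟨he, h0⟩ <;> rw [he] at hk ⊢ <;> omega
        rw [if_neg h1, if_neg h2, hb k (by push_cast; exact hbig)]
        ring
    obtain ⟨f', hf'⟩ := ih F' hs' hb'
    obtain ⟨g, hg⟩ := psi_mem (n+1)
    refine ⟨f' + Polynomial.C c * g, ?_⟩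
    rw [map_add, map_mul, hf', phi_C, hg, hF']
    push_cast
    ring

def borderM {m : ℕ} (b : Λ) (A : Matrix (Fin (m+1)) (Fin (m+1)) Λ) :
    Matrix (Fin (m+2)) (Fin (m+2)) Λ :=
  Matrix.of fun i j =>
    Fin.cases (Fin.cases b (fun _j' => if _j' = 0 then 1 else 0) j)
      (fun i' => Fin.cases (if i' = 0 then 1 else 0) (fun j' => A i' j') j) i

lemma borderM_zero_zero {m : ℕ} (b : Λ) (A : Matrix (Fin (m+1)) (Fin (m+1)) Λ) :
    borderM b A 0 0 = b := rfl

lemma borderM_zero_succ {m : ℕ} (b : Λ) (A : Matrix (Fin (m+1)) (Fin (m+1)) Λ) (j : Fin (m+1)) :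
    borderM b A 0 j.succ = if j = 0 then 1 else 0 := by
  simp [borderM]

lemma borderM_succ_zero {m : ℕ} (b : Λ) (A : Matrix (Fin (m+1)) (Fin (m+1)) Λ) (i : Fin (m+1)) :
    borderM b A i.succ 0 = if i = 0 then 1 else 0 := by
  simp [borderM]

lemma borderM_succ_succ {m : ℕ} (b : Λ) (A : Matrix (Fin (m+1)) (Fin (m+1)) Λ) (i j : Fin (m+1)) :
    borderM b A i.succ j.succ = A i j := by
  simp [borderM]

lemma borderM_submatrix {m : ℕ} (b : Λ) (A : Matrix (Fin (m+1)) (Fin (m+1)) Λ) :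
    (borderM b A).submatrix Fin.succ Fin.succ = A := by
  funext i j
  exact borderM_succ_succ b A i j

lemma borderM_det {m : ℕ} (b : Λ) (A : Matrix (Fin (m+1)) (Fin (m+1)) Λ) :
    (borderM b A).det = b * A.det - (A.submatrix Fin.succ Fin.succ).det := by
  rw [Matrix.det_succ_row_zero]
  rw [Fin.sum_univ_succ, Fin.sum_univ_succ]
  have hz : ∀ j : Fin m, borderM b A 0 (j.succ.succ) = 0 := by
    intro j
    rw [borderM_zero_succ]
    simp [Fin.succ_ne_zero]
  rw [Finset.sum_eq_zero (fun j _ => by rw [hz j]; ring)]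
  rw [borderM_zero_zero]
  rw [show ((0 : Fin (m+2)).succAbove) = Fin.succ from Fin.succAbove_zero]
  rw [borderM_submatrix]
  rw [borderM_zero_succ, if_pos rfl]
  -- remaining: the j = 1 minor
  set B := (borderM b A).submatrix Fin.succ ((0 : Fin (m+1)).succ.succAbove) with hB
  have hBdet : B.det = (A.submatrix Fin.succ Fin.succ).det := by
    rw [Matrix.det_succ_column_zero]
    have hcol : ∀ i : Fin (m+1), B i 0 = if i = 0 then 1 else 0 := by
      intro i
      rw [hB]
      show borderM b A i.succ (((0:Fin (m+1)).succ).succAbove 0) = _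
      have : ((0:Fin (m+1)).succ).succAbove 0 = 0 := rfl
      rw [this, borderM_succ_zero]
    rw [Fin.sum_univ_succ]
    rw [Finset.sum_eq_zero (fun i _ => by rw [hcol i.succ, if_neg (Fin.succ_ne_zero i)]; ring)]
    rw [hcol 0, if_pos rfl]
    have hsub : B.submatrix ((0:Fin (m+1)).succAbove) Fin.succ = A.submatrix Fin.succ Fin.succ := by
      funext i j
      rw [Fin.succAbove_zero, hB]
      show borderM b A i.succ.succ (((0:Fin (m+1)).succ).succAbove j.succ) = A i.succ j.succ
      have : ((0:Fin (m+1)).succ).succAbove j.succ = j.succ.succ := by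
        rw [Fin.succAbove]
        rw [if_neg]
        simp [Fin.lt_def]
      rw [this, borderM_succ_succ]
    rw [hsub]
    simp
  rw [hBdet]
  norm_num [Fin.val_succ, Fin.val_zero]
  ring

lemma lbar_algebraMap (c : ℚ) : lbar (algebraMap ℚ Λ c) = algebraMap ℚ Λ c := by
  rw [lbar_apply]
  exact (invert : Λ ≃ₐ[ℚ] Λ).commutes c

lemma borderM_herm {m : ℕ} {b : Λ} {A : Matrix (Fin (m+1)) (Fin (m+1)) Λ}
    (hb : lbar b = b) (hA : ∀ i j, lbar (A i j) = A j i) :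
    ∀ i j, lbar (borderM b A i j) = borderM b A j i := by
  intro i j
  induction i using Fin.cases with
  | zero =>
    induction j using Fin.cases with
    | zero =>
      exact hb
    | succ j =>
      show lbar (if j = 0 then 1 else 0) = if j = 0 then (1:Λ) else 0
      split <;> simp
  | succ i =>
    induction j using Fin.cases with
    | zero =>
      show lbar (if i = 0 then 1 else 0) = if i = 0 then (1:Λ) else 0
      split <;> simp
    | succ j =>
      exact hA i j

lemma main_aux : ∀ N : ℕ, ∀ p d : ℚ[X], p.natDegree ≤ N → IsCoprime p d →
    ∃ (n : ℕ) (A : Matrix (Fin (n+1)) (Fin (n+1)) Λ) (r : ℚ), r ≠ 0 ∧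
      (∀ i j, lbar (A i j) = A j i) ∧
      A.det = algebraMap ℚ Λ r * φL d ∧
      (A.submatrix Fin.succ Fin.succ).det = -(algebraMap ℚ Λ r * φL p) := by
  intro N
  induction N using Nat.strong_induction_on with
  | _ N ih =>
    intro p d hdeg hcop
    by_cases hp0 : p = 0
    · -- d is a unit, i.e. a nonzero constant
      subst hp0
      have hu : IsUnit d := isCoprime_zero_left.mp hcop
      obtain ⟨q, hq, hC⟩ := Polynomial.isUnit_iff.mp hu
      have hqne : q ≠ 0 := hq.ne_zero
      refine ⟨1, Matrix.of (fun i j => if i = j then 0 else 1), -q⁻¹, by simpa using hqne, ?_, ?_, ?_⟩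
      · intro i j
        rw [Matrix.of_apply, Matrix.of_apply]
        by_cases h : i = j
        · subst h; simp
        · rw [if_neg h, if_neg (fun hh => h hh.symm), map_one]
      · rw [Matrix.det_fin_two, Matrix.of_apply, Matrix.of_apply, Matrix.of_apply, Matrix.of_apply]
        rw [if_pos rfl, if_pos rfl, if_neg (by decide), if_neg (by decide)]
        rw [← hC, phi_C, LaurentPolynomial.C_eq_algebraMap, ← map_mul]
        rw [show -q⁻¹ * q = -1 from by field_simp]
        simp
      · rw [Matrix.det_fin_one, Matrix.submatrix_apply, Matrix.of_apply]
        rw [if_pos rfl, map_zero, mul_zero, neg_zero]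
    by_cases hdeg0 : p.natDegree = 0
    · -- p is a nonzero constant
      obtain ⟨c, rfl⟩ : ∃ c, p = Polynomial.C c := ⟨p.coeff 0, Polynomial.eq_C_of_natDegree_eq_zero hdeg0⟩
      have hc : c ≠ 0 := fun h => hp0 (by rw [h, map_zero])
      refine ⟨0, Matrix.of (fun _ _ => algebraMap ℚ Λ (-c⁻¹) * φL d), -c⁻¹, by simpa using hc, ?_, ?_, ?_⟩
      · intro i j
        rw [Matrix.of_apply, Matrix.of_apply, map_mul, lbar_algebraMap, symm_phi d]
      · rw [Matrix.det_fin_one, Matrix.of_apply]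
      · rw [Matrix.det_fin_zero]
        rw [phi_C, LaurentPolynomial.C_eq_algebraMap, ← map_mul]
        rw [show -c⁻¹ * c = -1 from by field_simp]
        simp
    · -- Euclidean step
      have hp1 : 1 ≤ p.natDegree := Nat.one_le_iff_ne_zero.mpr hdeg0
      set lc := p.leadingCoeff with hlc
      have hlcne : lc ≠ 0 := Polynomial.leadingCoeff_ne_zero.mpr hp0
      set mθ := p * Polynomial.C lc⁻¹ with hmθ
      have hmon : mθ.Monic := Polynomial.monic_mul_leadingCoeff_inv hp0
      set a := Polynomial.C lc⁻¹ * (d /ₘ mθ) with ha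
      set g := p * a - d with hg
      have hpa : p * a = mθ * (d /ₘ mθ) := by rw [ha, hmθ]; ring
      have hgrem : g = -(d %ₘ mθ) := by
        rw [hg, hpa]
        have := Polynomial.modByMonic_add_div d mθ
        linear_combination this
      have hdegg : g.natDegree < p.natDegree := by
        by_cases hg0 : g = 0
        · rw [hg0, Polynomial.natDegree_zero]; omega
        · apply Polynomial.natDegree_lt_natDegree hg0
          rw [hgrem, Polynomial.degree_neg]
          calc (d %ₘ mθ).degree < mθ.degree := Polynomial.degree_modByMonic_lt d hmon
          _ = p.degree := by
              rw [hmθ]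
              exact Polynomial.degree_mul_leadingCoeff_inv p hp0
      have hcop' : IsCoprime g p := by
        have h1 : IsCoprime p (-d + p * a) := (hcop.neg_right).add_mul_left_right a
        have h2 : g = -d + p * a := by rw [hg]; ring
        rw [h2]
        exact h1.symm
      obtain ⟨n', A', r', hr', hherm', hdet', hcof'⟩ :=
        ih (p.natDegree - 1) (by omega) g p (by omega) hcop'
      refine ⟨n' + 1, borderM (-φL a) A', -r', by simpa using hr', ?_, ?_, ?_⟩
      · exact borderM_herm (by rw [map_neg, symm_phi a]) hherm'
      · rw [borderM_det, hdet', hcof']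
        have : φL g = φL p * φL a - φL d := by rw [hg]; simp
        rw [map_neg]
        linear_combination (algebraMap ℚ Λ r') * this
      · rw [borderM_submatrix, hdet', map_neg]
        ring


lemma symm_surj (F : Λ) (hs : SymmL F) : ∃ f : ℚ[X], φL f = F := by
  apply symm_surj_aux (F.coeff.support.sup fun k => k.natAbs) F hs
  intro k hk
  by_contra h
  have hmem : k ∈ F.coeff.support := Finsupp.mem_support_iff.mpr h
  have hle := Finset.le_sup (f := fun k : ℤ => k.natAbs) hmem
  have : |k| = (k.natAbs : ℤ) := (Int.abs_eq_natAbs k)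
  rw [this] at hk
  have hle' : k.natAbs ≤ F.coeff.support.sup fun k => k.natAbs := hle
  omega


/-- realization of `(Δ, P)` by a hermitian matrix with prescribed
determinant and `(1,1)`-cofactor. -/
theorem stmt_12 (Δ P : Λ) (hΔsym : SymmL Δ) (hΔ1 : evalL 1 Δ ≠ 0)
    (hPsym : SymmL P) (hcop : IsCoprime P Δ) :
    ∃ (n : ℕ) (Amat : Matrix (Fin (n + 1)) (Fin (n + 1)) Λ) (r : ℚ),
      r ≠ 0 ∧
      (∀ i j, lbar (Amat i j) = Amat j i) ∧
      Amat.det = algebraMap ℚ Λ r * Δ ∧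
      (Amat.submatrix Fin.succ Fin.succ).det = -(algebraMap ℚ Λ r * P) := by
  
  obtain ⟨u, v, huv⟩ := hcop
  have hbar : lbar u * P + lbar v * Δ = 1 := by
    have h := congrArg lbar huv
    rw [map_add, map_mul, map_mul, hPsym, hΔsym, map_one] at h
    exact h
  have h2 : (LaurentPolynomial.C (1/2 : ℚ) : Λ) * 2 = 1 := by
    rw [show (2:Λ) = LaurentPolynomial.C 2 from (map_ofNat LaurentPolynomial.C 2).symm, ← map_mul]
    norm_num
  set u' : Λ := LaurentPolynomial.C (1/2 : ℚ) * (u + lbar u) with hu'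
  set v' : Λ := LaurentPolynomial.C (1/2 : ℚ) * (v + lbar v) with hv'
  have hsum : u' * P + v' * Δ = 1 := by
    rw [hu', hv']
    linear_combination (LaurentPolynomial.C (1/2 : ℚ) : Λ) * huv +
      (LaurentPolynomial.C (1/2 : ℚ) : Λ) * hbar + h2
  have hsu : SymmL u' := by
    rw [SymmL, hu', map_mul, map_add, lbar_C, lbar_lbar]
    ring
  have hsv : SymmL v' := by
    rw [SymmL, hv', map_mul, map_add, lbar_C, lbar_lbar]
    ring
  obtain ⟨p, hp⟩ := symm_surj P hPsym
  obtain ⟨dq, hd⟩ := symm_surj Δ hΔsym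
  obtain ⟨u₀, hu₀⟩ := symm_surj u' hsu
  obtain ⟨v₀, hv₀⟩ := symm_surj v' hsv
  have hcop2 : IsCoprime p dq := by
    refine ⟨u₀, v₀, phi_injective ?_⟩
    rw [map_add, map_mul, map_mul, hu₀, hv₀, hp, hd, map_one]
    exact hsum
  obtain ⟨n, A, r, hr, hherm, hdet, hcof⟩ := main_aux p.natDegree p dq le_rfl hcop2
  exact ⟨n, A, r, hr, hherm, by rw [← hd]; exact hdet, by rw [← hp]; exact hcof⟩
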